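/- Let H and K be real inner product spaces, let D : H → K be a linear map, let φ_1, …, φ_R be an orthonormal family in H, and define the symmetric R×R real matrix S by S_{ii'} = ⟨φ_i, φ_{i'}⟩_H + ⟨Dφ_i, Dφ_{i'}⟩_K. Let Π_R v := Σ_{i=1}^R ⟨v, φ_i⟩ φ_i denote the orthogonal projection onto span{φ_1, …, φ_R}. Then for every v ∈ H, ‖D(Π_R v)‖ ≤ ‖S‖₂^{1/2} ‖v‖, where ‖S‖₂ denotes the spectral norm of S. -/

import Mathlib

open RealInnerProductSpace

/-- The spectral norm of a real `R × R` matrix: the operator norm of the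
associated linear map on Euclidean space. -/
noncomputable def matSpectralNorm {R : ℕ} (S : Matrix (Fin R) (Fin R) ℝ) : ℝ :=
  ‖(Matrix.toEuclideanCLM (𝕜 := ℝ) S :
      EuclideanSpace ℝ (Fin R) →L[ℝ] EuclideanSpace ℝ (Fin R))‖

/-- D-seminorm stability of the POD projection: if `φ₁, …, φ_R` is an orthonormal family
in `H`, `D : H → K` is linear, `S` is the matrix with entries
`S_{ii'} = ⟨φ_i, φ_{i'}⟩ + ⟨Dφ_i, Dφ_{i'}⟩`, and `Π_R v = Σ_{i=1}^R ⟨v, φ_i⟩ φ_i`, then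
`‖D(Π_R v)‖ ≤ ‖S‖₂^{1/2} ‖v‖` for every `v ∈ H`. -/
theorem pod_projection_gradient_stability
    {H K : Type*} [NormedAddCommGroup H] [InnerProductSpace ℝ H]
    [NormedAddCommGroup K] [InnerProductSpace ℝ K]
    (D : H →ₗ[ℝ] K) {R : ℕ} (φ : Fin R → H) (hortho : Orthonormal ℝ φ)
    (S : Matrix (Fin R) (Fin R) ℝ)
    (hS : ∀ i i' : Fin R, S i i' = ⟪φ i, φ i'⟫ + ⟪D (φ i), D (φ i')⟫)
    (P : H → H) (hP : ∀ v, P v = ∑ i, ⟪v, φ i⟫ • φ i)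
    (v : H) :
    ‖D (P v)‖ ≤ Real.sqrt (matSpectralNorm S) * ‖v‖ := by
  classical
  set T := (Matrix.toEuclideanCLM (𝕜 := ℝ) S :
      EuclideanSpace ℝ (Fin R) →L[ℝ] EuclideanSpace ℝ (Fin R))
  set a : EuclideanSpace ℝ (Fin R) := (WithLp.equiv 2 (Fin R → ℝ)).symm (fun i => ⟪v, φ i⟫)
    with ha
  have haap : ∀ i, a i = ⟪v, φ i⟫ := fun i => rfl
  have hTa : ∀ i, T a i = ∑ j, S i j * a j := by
    intro i
    show (Matrix.toEuclideanLin S a) i = _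
    rw [Matrix.toEuclideanLin_apply]
    rfl
  -- inner product ⟪a, T a⟫ = ∑ i, ∑ j, a i * S i j * a j
  have hinner : ⟪a, T a⟫ = ∑ i, ∑ j, a i * (S i j * a j) := by
    rw [PiLp.inner_apply]
    refine Finset.sum_congr rfl fun i _ => ?_
    rw [hTa, RCLike.inner_apply, starRingEnd_apply, star_trivial, Finset.sum_mul]
    exact Finset.sum_congr rfl fun j _ => by ring
  -- ‖P v‖² + ‖D (P v)‖² = ⟪a, T a⟫
  have hPv : P v = ∑ i, a i • φ i := by rw [hP]; rfl
  have hDPv : D (P v) = ∑ i, a i • D (φ i) := by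
    rw [hPv, map_sum]; simp
  have hsum : ⟪P v, P v⟫ + ⟪D (P v), D (P v)⟫ = ⟪a, T a⟫ := by
    rw [hinner, hDPv, hPv, sum_inner, sum_inner, ← Finset.sum_add_distrib]
    refine Finset.sum_congr rfl fun i _ => ?_
    rw [inner_sum, inner_sum, ← Finset.sum_add_distrib]
    refine Finset.sum_congr rfl fun j _ => ?_
    simp only [inner_smul_left, inner_smul_right, starRingEnd_apply, star_trivial]
    rw [hS]
    ring
  have hDle : ‖D (P v)‖ ^ 2 ≤ ⟪a, T a⟫ := by
    rw [← hsum, ← real_inner_self_eq_norm_sq]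
    nlinarith [(real_inner_self_nonneg : (0:ℝ) ≤ ⟪P v, P v⟫)]
  have hbound : ⟪a, T a⟫ ≤ matSpectralNorm S * ‖a‖ ^ 2 := by
    calc ⟪a, T a⟫ ≤ ‖a‖ * ‖T a‖ := real_inner_le_norm a (T a)
    _ ≤ ‖a‖ * (‖T‖ * ‖a‖) := by
        gcongr; exact T.le_opNorm a
    _ = matSpectralNorm S * ‖a‖ ^ 2 := by rw [matSpectralNorm]; ring
  have hBessel : ‖a‖ ^ 2 ≤ ‖v‖ ^ 2 := by
    have := hortho.sum_inner_products_le (s := Finset.univ) v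
    rw [← real_inner_self_eq_norm_sq, PiLp.inner_apply]
    refine le_trans (le_of_eq ?_) this
    refine Finset.sum_congr rfl fun i _ => ?_
    rw [haap i, RCLike.inner_apply, starRingEnd_apply, star_trivial,
      real_inner_comm (φ i) v]
    rw [Real.norm_eq_abs, sq_abs]
    ring
  have hspec0 : 0 ≤ matSpectralNorm S := norm_nonneg _
  have key : ‖D (P v)‖ ^ 2 ≤ matSpectralNorm S * ‖v‖ ^ 2 := by
    refine hDle.trans (hbound.trans ?_)
    gcongr
  calc ‖D (P v)‖ = Real.sqrt (‖D (P v)‖ ^ 2) := (Real.sqrt_sq (norm_nonneg _)).symm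
  _ ≤ Real.sqrt (matSpectralNorm S * ‖v‖ ^ 2) := Real.sqrt_le_sqrt key
  _ = Real.sqrt (matSpectralNorm S) * ‖v‖ := by
      rw [Real.sqrt_mul hspec0, Real.sqrt_sq (norm_nonneg _)]
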